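/- arXiv:1405.7531 — 2 statements merged into one kernel-verified Lean document; each statement's English description precedes it below -/
import Mathlib

section
/- Let f : ℕ → ℝ satisfy f(k) ≥ c > 0 for all k, and let (b_k)_{k≥1} be positive, monotone decreasing, converging to 0, with S = Σ_{k=1}^∞ b_k < ∞. For E > 0 define n(E) = max{k : b_k ≥ π/√E}, the lower-bracket counting function N(E) = Σ_{k=1}^∞ #{(l,m) ∈ ℤ² : l ≥ 1, m ≥ 1, π²l²/f(k)² + π²m²/b_k² ≤ E}, the core volume V(E) = Σ_{k=1}^{n(E)} f(k)·b_k, the summed perimeter L(E) = Σ_{k=1}^{n(E)} 2·(f(k) + b_k), and the summed area error G(E) = Σ_{k=1}^{n(E)} (1/4)·(P_k(√E/π) − (f(k)·b_k/π)·E), where P_k(R) = #{(l,m) ∈ ℤ² : l²/f(k)² + m²/b_k² ≤ R²}. Then there is a constant C > 0 such that for all E ≥ 1, |N(E) − ((1/(4π))·V(E)·E − (1/(4π))·L(E)·√E + G(E))| ≤ C·√E. This is the main asymptotic law for simple domains, expressing the eigenvalue counting function through the geometry of the spectral cores with error O(√E). -/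
open Real Filter

/-- The Dirichlet eigenvalue counting function of the rectangle with side
lengths `a` and `b`: the number of integer pairs `(l, m)` with `l, m ≥ 1`
and `π²l²/a² + π²m²/b² ≤ E`. -/
noncomputable def dirichletCount (a b E : ℝ) : ℕ :=
  Set.ncard {p : ℤ × ℤ | 1 ≤ p.1 ∧ 1 ≤ p.2 ∧
    Real.pi ^ 2 * (p.1 : ℝ) ^ 2 / a ^ 2 + Real.pi ^ 2 * (p.2 : ℝ) ^ 2 / b ^ 2 ≤ E}

/-- `P_k(R)`: the number of integer lattice points `(l, m)` with
`l²/a² + m²/b² ≤ R²`. -/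
noncomputable def fullEllipseCount (a b R : ℝ) : ℕ :=
  Set.ncard {p : ℤ × ℤ |
    (p.1 : ℝ) ^ 2 / a ^ 2 + (p.2 : ℝ) ^ 2 / b ^ 2 ≤ R ^ 2}

/-- The number of rectangles thick enough to support eigenvalues of size at
most `E` (sequences are `0`-indexed; for `b` antitone this is
`max{k : b_k ≥ π/√E}` in `1`-indexed notation). -/
noncomputable def coreIndex (b : ℕ → ℝ) (E : ℝ) : ℕ :=
  Set.ncard {k : ℕ | Real.pi / Real.sqrt E ≤ b k}

lemma ncard_involution {α : Type*} (s : Set α) (hs : s.Finite) (σ : α → α)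
    (hinv : ∀ x, σ (σ x) = x) (hmem : ∀ x ∈ s, σ x ∈ s) (p : α → Prop)
    (hex : ∀ x ∈ s, ¬ p x → ¬ p (σ x) → σ x = x)
    (hpn : ∀ x, p x → ¬ p (σ x)) :
    s.ncard = 2 * {x | x ∈ s ∧ p x}.ncard + {x | x ∈ s ∧ σ x = x}.ncard := by
  have hinj : Function.Injective σ := Function.LeftInverse.injective hinv
  set P : Set α := {x | x ∈ s ∧ p x} with hP
  set F : Set α := {x | x ∈ s ∧ σ x = x} with hF
  have hPs : P ⊆ s := fun x hx => hx.1
  have hFs : F ⊆ s := fun x hx => hx.1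
  have hPfin : P.Finite := hs.subset hPs
  have hFfin : F.Finite := hs.subset hFs
  have hQfin : (σ '' P).Finite := hPfin.image σ
  have hQs : σ '' P ⊆ s := by
    rintro x ⟨y, hy, rfl⟩; exact hmem y hy.1
  have hFnp : ∀ x ∈ F, ¬ p x := by
    intro x hx hpx
    exact hpn x hpx (hx.2.symm ▸ hpx)
  have hQnp : ∀ x ∈ σ '' P, ¬ p x := by
    rintro x ⟨y, hy, rfl⟩; exact hpn y hy.2
  have hcov : s = (P ∪ σ '' P) ∪ F := by
    ext x
    constructor
    · intro hx
      by_cases h1 : p x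
      · exact Or.inl (Or.inl ⟨hx, h1⟩)
      by_cases h2 : p (σ x)
      · exact Or.inl (Or.inr ⟨σ x, ⟨hmem x hx, h2⟩, hinv x⟩)
      · exact Or.inr ⟨hx, hex x hx h1 h2⟩
    · rintro ((hx | hx) | hx)
      · exact hPs hx
      · exact hQs hx
      · exact hFs hx
  have hd1 : Disjoint P (σ '' P) := by
    rw [Set.disjoint_left]
    intro x hx hx'
    exact hQnp x hx' hx.2
  have hd2 : Disjoint (P ∪ σ '' P) F := by
    rw [Set.disjoint_left]
    rintro x (hx | hx) hxF
    · exact hFnp x hxF hx.2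
    · rcases hx with ⟨y, hy, rfl⟩
      have hyy : y = σ y := (hinv y).symm.trans hxF.2
      exact hpn y hy.2 (hyy ▸ hy.2)
  rw [hcov, Set.ncard_union_eq hd2 (hPfin.union hQfin) hFfin,
    Set.ncard_union_eq hd1 hPfin hQfin, Set.ncard_image_of_injective _ hinj]
  ring

lemma axis_count (a R : ℝ) (ha : 0 < a) (hR : 0 ≤ R) :
    {l : ℤ | 1 ≤ l ∧ (l:ℝ)^2/a^2 ≤ R^2}.ncard = (⌊a*R⌋).toNat := by
  have hset : {l : ℤ | 1 ≤ l ∧ (l:ℝ)^2/a^2 ≤ R^2} = Set.Icc 1 ⌊a*R⌋ := by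
    ext l
    simp only [Set.mem_setOf_eq, Set.mem_Icc]
    constructor
    · rintro ⟨h1, h2⟩
      refine ⟨h1, Int.le_floor.2 ?_⟩
      have hl0 : (0:ℝ) ≤ (l:ℝ) := by exact_mod_cast le_trans zero_le_one h1
      have h2' : (l:ℝ)^2 ≤ (a*R)^2 := by
        rw [div_le_iff₀ (by positivity)] at h2
        calc (l:ℝ)^2 ≤ R^2*a^2 := h2
        _ = (a*R)^2 := by ring
      exact (pow_le_pow_iff_left₀ hl0 (by positivity) two_ne_zero).1 h2'
    · rintro ⟨h1, h2⟩
      have hl0 : (0:ℝ) ≤ (l:ℝ) := by exact_mod_cast le_trans zero_le_one h1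
      have h2' : (l:ℝ) ≤ a*R := Int.le_floor.1 h2
      refine ⟨h1, ?_⟩
      rw [div_le_iff₀ (by positivity)]
      calc (l:ℝ)^2 ≤ (a*R)^2 := pow_le_pow_left₀ hl0 h2' 2
      _ = R^2*a^2 := by ring
  rw [hset, ← Finset.coe_Icc, Set.ncard_coe_finset, Int.card_Icc]
  congr 1
  ring

lemma rect_id (a b E : ℝ) (ha : 0 < a) (hb : 0 < b) (hE : 0 ≤ E) :
    (fullEllipseCount a b (Real.sqrt E / Real.pi) : ℤ) =
      4 * (dirichletCount a b E : ℤ) + 2 * ⌊a * (Real.sqrt E / Real.pi)⌋ +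
        2 * ⌊b * (Real.sqrt E / Real.pi)⌋ + 1 := by
  set R : ℝ := Real.sqrt E / Real.pi with hRdef
  have hR : 0 ≤ R := by positivity
  have hR2 : R ^ 2 = E / Real.pi ^ 2 := by
    rw [hRdef, div_pow, Real.sq_sqrt hE]
  set S : Set (ℤ × ℤ) := {p : ℤ × ℤ |
    (p.1 : ℝ) ^ 2 / a ^ 2 + (p.2 : ℝ) ^ 2 / b ^ 2 ≤ R ^ 2} with hSdef
  -- condition equivalence
  have hcond : ∀ p : ℤ × ℤ, p ∈ S ↔
      Real.pi ^ 2 * (p.1 : ℝ) ^ 2 / a ^ 2 + Real.pi ^ 2 * (p.2 : ℝ) ^ 2 / b ^ 2 ≤ E := by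
    intro p
    have hpi : (0:ℝ) < Real.pi ^ 2 := by positivity
    have key : Real.pi ^ 2 * (p.1 : ℝ) ^ 2 / a ^ 2 + Real.pi ^ 2 * (p.2 : ℝ) ^ 2 / b ^ 2
        = ((p.1 : ℝ) ^ 2 / a ^ 2 + (p.2 : ℝ) ^ 2 / b ^ 2) * Real.pi ^ 2 := by ring
    simp only [hSdef, Set.mem_setOf_eq, hR2, le_div_iff₀ hpi]
    constructor <;> intro h <;> linarith [key]
  -- finiteness
  have hSfin : S.Finite := by
    apply Set.Finite.subset ((Set.finite_Icc (-⌊a*R⌋) ⌊a*R⌋).prod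
      (Set.finite_Icc (-⌊b*R⌋) ⌊b*R⌋))
    intro p hp
    have hp' : (p.1:ℝ)^2/a^2 + (p.2:ℝ)^2/b^2 ≤ R^2 := hp
    have h1 : (p.1:ℝ)^2 ≤ (a*R)^2 := by
      have h2 : (0:ℝ) ≤ (p.2:ℝ)^2/b^2 := by positivity
      have h1 : (p.1:ℝ)^2/a^2 ≤ R^2 := by linarith
      rw [div_le_iff₀ (by positivity)] at h1
      nlinarith
    have h2 : (p.2:ℝ)^2 ≤ (b*R)^2 := by
      have h2' : (0:ℝ) ≤ (p.1:ℝ)^2/a^2 := by positivity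
      have h2 : (p.2:ℝ)^2/b^2 ≤ R^2 := by linarith
      rw [div_le_iff₀ (by positivity)] at h2
      nlinarith
    have haR : (0:ℝ) ≤ a*R := by positivity
    have hbR : (0:ℝ) ≤ b*R := by positivity
    constructor
    · simp only [Set.mem_Icc]
      constructor
      · rw [neg_le]
        refine Int.le_floor.2 ?_
        push_cast
        nlinarith
      · refine Int.le_floor.2 ?_
        nlinarith
    · simp only [Set.mem_Icc]
      constructor
      · rw [neg_le]
        refine Int.le_floor.2 ?_
        push_cast
        nlinarith
      · refine Int.le_floor.2 ?_
        nlinarith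
  -- first involution: reflect first coordinate
  have hsymm : ∀ (x y : ℤ) (p : ℤ × ℤ), p ∈ S → ((x:ℝ)^2 = (p.1:ℝ)^2) → ((y:ℝ)^2 = (p.2:ℝ)^2) → ((x, y) : ℤ × ℤ) ∈ S := by
    intro x y p hp h1 h2
    simp only [hSdef, Set.mem_setOf_eq] at hp ⊢
    rw [h1, h2]
    exact hp
  have step1 : S.ncard = 2 * {x | x ∈ S ∧ 1 ≤ x.1}.ncard +
      {x | x ∈ S ∧ ((-x.1, x.2) : ℤ × ℤ) = x}.ncard := by
    refine ncard_involution S hSfin (fun p => (-p.1, p.2)) (fun p => by simp)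
      (fun p hp => hsymm _ _ p hp (by push_cast; ring) rfl) (fun p => 1 ≤ p.1) ?_ ?_
    · intro p _ h1 h2
      simp only at h1 h2 ⊢
      have : p.1 = 0 := by omega
      rw [Prod.ext_iff]
      exact ⟨by simp [this], rfl⟩
    · intro p h1
      simp only at h1 ⊢
      omega
  have hF1 : {x | x ∈ S ∧ ((-x.1, x.2) : ℤ × ℤ) = x} = {x | x ∈ S ∧ x.1 = 0} := by
    ext x
    simp only [Set.mem_setOf_eq, Prod.ext_iff]
    constructor
    · rintro ⟨hx, h1, -⟩
      exact ⟨hx, by omega⟩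
    · rintro ⟨hx, h1⟩
      exact ⟨hx, by omega, trivial⟩
  have step2 : {x | x ∈ S ∧ 1 ≤ x.1}.ncard =
      2 * {x | (x ∈ S ∧ 1 ≤ x.1) ∧ 1 ≤ x.2}.ncard +
      {x | (x ∈ S ∧ 1 ≤ x.1) ∧ ((x.1, -x.2) : ℤ × ℤ) = x}.ncard := by
    refine ncard_involution _ (hSfin.subset (fun x hx => hx.1)) (fun p => (p.1, -p.2))
      (fun p => by simp) ?_ (fun p => 1 ≤ p.2) ?_ ?_
    · rintro p ⟨hp, h1⟩
      exact ⟨hsymm _ _ p hp rfl (by push_cast; ring), h1⟩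
    · rintro p ⟨hp, h1⟩ h2 h3
      simp only at h2 h3 ⊢
      have : p.2 = 0 := by omega
      rw [Prod.ext_iff]
      exact ⟨rfl, by simp [this]⟩
    · intro p h1
      simp only at h1 ⊢
      omega
  have step3 : {x | x ∈ S ∧ x.1 = 0}.ncard =
      2 * {x | (x ∈ S ∧ x.1 = 0) ∧ 1 ≤ x.2}.ncard +
      {x | (x ∈ S ∧ x.1 = 0) ∧ ((x.1, -x.2) : ℤ × ℤ) = x}.ncard := by
    refine ncard_involution _ (hSfin.subset (fun x hx => hx.1)) (fun p => (p.1, -p.2))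
      (fun p => by simp) ?_ (fun p => 1 ≤ p.2) ?_ ?_
    · rintro p ⟨hp, h1⟩
      exact ⟨hsymm _ _ p hp rfl (by push_cast; ring), h1⟩
    · rintro p ⟨hp, h1⟩ h2 h3
      simp only at h2 h3 ⊢
      have : p.2 = 0 := by omega
      rw [Prod.ext_iff]
      exact ⟨rfl, by simp [this]⟩
    · intro p h1
      simp only at h1 ⊢
      omega
  -- identify the pieces
  have hN : {x | (x ∈ S ∧ 1 ≤ x.1) ∧ 1 ≤ x.2}.ncard = dirichletCount a b E := by
    unfold dirichletCount
    congr 1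
    ext p
    simp only [Set.mem_setOf_eq]
    rw [hcond p]
    tauto
  have hAset : {x | (x ∈ S ∧ 1 ≤ x.1) ∧ ((x.1, -x.2) : ℤ × ℤ) = x} =
      (fun l => ((l, 0) : ℤ × ℤ)) '' {l : ℤ | 1 ≤ l ∧ (l:ℝ)^2/a^2 ≤ R^2} := by
    ext ⟨l, m⟩
    simp only [Set.mem_setOf_eq, Prod.ext_iff, Set.mem_image, hSdef]
    constructor
    · rintro ⟨⟨hp, h1⟩, -, h2⟩
      have hm : m = 0 := by omega
      subst hm
      refine ⟨l, ⟨h1, ?_⟩, rfl, rfl⟩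
      have h0 : ((0:ℝ))^2 / b^2 = 0 := by simp
      have hp' : (l:ℝ)^2/a^2 + ((0:ℤ):ℝ)^2/b^2 ≤ R^2 := hp
      push_cast at hp'
      linarith
    · rintro ⟨x, ⟨h1, h2⟩, rfl, rfl⟩
      refine ⟨⟨?_, h1⟩, trivial, by omega⟩
      simp only [Set.mem_setOf_eq, Int.cast_zero]
      have : ((0:ℝ))^2 / b^2 = 0 := by simp
      linarith
  have hBset : {x | (x ∈ S ∧ x.1 = 0) ∧ 1 ≤ x.2} =
      (fun m => ((0, m) : ℤ × ℤ)) '' {m : ℤ | 1 ≤ m ∧ (m:ℝ)^2/b^2 ≤ R^2} := by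
    ext ⟨l, m⟩
    simp only [Set.mem_setOf_eq, Prod.ext_iff, Set.mem_image, hSdef]
    constructor
    · rintro ⟨⟨hp, h1⟩, h2⟩
      subst h1
      refine ⟨m, ⟨h2, ?_⟩, rfl, rfl⟩
      simp only [Set.mem_setOf_eq, Int.cast_zero] at hp
      have : ((0:ℝ))^2 / a^2 = 0 := by simp
      linarith
    · rintro ⟨x, ⟨h1, h2⟩, rfl, rfl⟩
      refine ⟨⟨?_, rfl⟩, h1⟩
      simp only [Set.mem_setOf_eq, Int.cast_zero]
      have : ((0:ℝ))^2 / a^2 = 0 := by simp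
      linarith
  have hCset : {x | (x ∈ S ∧ x.1 = 0) ∧ ((x.1, -x.2) : ℤ × ℤ) = x} = {((0:ℤ), (0:ℤ))} := by
    ext ⟨l, m⟩
    simp only [Set.mem_setOf_eq, Prod.ext_iff, Set.mem_singleton_iff, hSdef]
    constructor
    · rintro ⟨⟨hp, h1⟩, -, h2⟩
      exact ⟨h1, by omega⟩
    · rintro ⟨rfl, rfl⟩
      refine ⟨⟨?_, rfl⟩, trivial, by omega⟩
      simp only [Set.mem_setOf_eq, Int.cast_zero]
      have h0 : ((0:ℝ))^2 / a^2 + ((0:ℝ))^2 / b^2 = 0 := by simp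
      have : (0:ℝ) ≤ R^2 := by positivity
      linarith
  have hinjA : Function.Injective (fun l : ℤ => ((l, 0) : ℤ × ℤ)) := by
    intro x y h
    exact (Prod.ext_iff.1 h).1
  have hinjB : Function.Injective (fun m : ℤ => ((0, m) : ℤ × ℤ)) := by
    intro x y h
    exact (Prod.ext_iff.1 h).2
  have hAcount : {x | (x ∈ S ∧ 1 ≤ x.1) ∧ ((x.1, -x.2) : ℤ × ℤ) = x}.ncard = (⌊a*R⌋).toNat := by
    rw [hAset, Set.ncard_image_of_injective _ hinjA, axis_count a R ha hR]
  have hBcount : {x | (x ∈ S ∧ x.1 = 0) ∧ 1 ≤ x.2}.ncard = (⌊b*R⌋).toNat := by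
    rw [hBset, Set.ncard_image_of_injective _ hinjB, axis_count b R hb hR]
  have hCcount : {x | (x ∈ S ∧ x.1 = 0) ∧ ((x.1, -x.2) : ℤ × ℤ) = x}.ncard = 1 := by
    rw [hCset, Set.ncard_singleton]
  have hfull : fullEllipseCount a b R = S.ncard := rfl
  have htotal : fullEllipseCount a b R =
      4 * dirichletCount a b E + 2 * (⌊a*R⌋).toNat + 2 * (⌊b*R⌋).toNat + 1 := by
    rw [hfull, step1, hF1, step2, step3, hN, hAcount, hBcount, hCcount]
    ring
  have hA0 : (0:ℤ) ≤ ⌊a*R⌋ := Int.floor_nonneg.2 (by positivity)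
  have hB0 : (0:ℤ) ≤ ⌊b*R⌋ := Int.floor_nonneg.2 (by positivity)
  have := congrArg (fun n : ℕ => (n : ℤ)) htotal
  simp only [Nat.cast_add, Nat.cast_mul, Nat.cast_ofNat, Nat.cast_one] at this
  rw [Int.toNat_of_nonneg hA0, Int.toNat_of_nonneg hB0] at this
  exact this

lemma per_k (a b E : ℝ) (ha : 0 < a) (hb : 0 < b) (hE : 1 ≤ E) :
    |(dirichletCount a b E : ℝ) -
      ((1 / (4 * Real.pi)) * (a * b) * E -
        (1 / (4 * Real.pi)) * (2 * (a + b)) * Real.sqrt E +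
        (1 / 4) * ((fullEllipseCount a b (Real.sqrt E / Real.pi) : ℝ) -
          (a * b / Real.pi) * E))| ≤ 1 := by
  have hE0 : (0:ℝ) ≤ E := le_trans zero_le_one hE
  set R : ℝ := Real.sqrt E / Real.pi with hRdef
  have hpi : (0:ℝ) < Real.pi := Real.pi_pos
  have hsq : Real.sqrt E = Real.pi * R := by
    rw [hRdef]; field_simp
  have hid : (fullEllipseCount a b R : ℝ) =
      4 * (dirichletCount a b E : ℝ) + 2 * (⌊a * R⌋ : ℝ) + 2 * (⌊b * R⌋ : ℝ) + 1 := by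
    have := rect_id a b E ha hb hE0
    exact_mod_cast congrArg (fun z : ℤ => (z : ℝ)) this
  have hA1 : ((⌊a * R⌋ : ℝ)) ≤ a * R := Int.floor_le _
  have hA2 : a * R < (⌊a * R⌋ : ℝ) + 1 := Int.lt_floor_add_one _
  have hB1 : ((⌊b * R⌋ : ℝ)) ≤ b * R := Int.floor_le _
  have hB2 : b * R < (⌊b * R⌋ : ℝ) + 1 := Int.lt_floor_add_one _
  have hkey : (dirichletCount a b E : ℝ) -
      ((1 / (4 * Real.pi)) * (a * b) * E -
        (1 / (4 * Real.pi)) * (2 * (a + b)) * Real.sqrt E +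
        (1 / 4) * ((fullEllipseCount a b R : ℝ) - (a * b / Real.pi) * E)) =
      (a * R - (⌊a * R⌋ : ℝ)) / 2 + (b * R - (⌊b * R⌋ : ℝ)) / 2 - 1 / 4 := by
    rw [hid, hsq]
    have hpne : Real.pi ≠ 0 := ne_of_gt hpi
    field_simp
    ring_nf
  rw [hkey, abs_le]
  constructor <;> linarith

lemma coreIndex_eq (b : ℕ → ℝ) (E : ℝ) (hE : 1 ≤ E)
    (hmono : Antitone b) (hlim : Filter.Tendsto b Filter.atTop (nhds 0)) :
    {k : ℕ | Real.pi / Real.sqrt E ≤ b k} = Set.Iio (Set.ncard {k : ℕ | Real.pi / Real.sqrt E ≤ b k}) := by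
  set t : ℝ := Real.pi / Real.sqrt E with htdef
  have hE0 : (0:ℝ) < E := lt_of_lt_of_le one_pos hE
  have hsE : (0:ℝ) < Real.sqrt E := Real.sqrt_pos.2 hE0
  have ht : 0 < t := by positivity
  have hne : {j : ℕ | b j < t}.Nonempty := by
    have := hlim.eventually (eventually_lt_nhds ht)
    rcases this.exists with ⟨k, hk⟩
    exact ⟨k, hk⟩
  set m := sInf {j : ℕ | b j < t} with hmdef
  have hmm : b m < t := Nat.sInf_mem hne
  have hset : {k : ℕ | t ≤ b k} = Set.Iio m := by
    ext k
    simp only [Set.mem_setOf_eq, Set.mem_Iio]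
    constructor
    · intro hk
      by_contra h
      push_neg at h
      exact absurd (lt_of_le_of_lt hk (lt_of_le_of_lt (hmono h) hmm)) (lt_irrefl _)
    · intro hk
      have : k ∉ {j : ℕ | b j < t} := fun hmem => absurd (Nat.sInf_le hmem) (by omega)
      simpa [not_lt] using this
  rw [hset]
  rw [← Finset.coe_range, Set.ncard_coe_finset, Finset.card_range]
  exact Finset.coe_range m

/-- Main asymptotic law for simple domains (lower bracket): the summed
Dirichlet lattice count equals
`(1/(4π))·V(E)·E − (1/(4π))·L(E)·√E + G(E)` up to an error `O(√E)`,
where `V`, `L`, `G` are the core volume, summed perimeter and summed area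
error of the spectral core. -/
theorem simple_domain_weyl_law (f b : ℕ → ℝ) (c : ℝ) (hc : 0 < c)
    (hf : ∀ k, c ≤ f k) (hb : ∀ k, 0 < b k) (hmono : Antitone b)
    (hlim : Tendsto b atTop (nhds 0)) (hsum : Summable b) :
    ∃ C > (0 : ℝ), ∀ E : ℝ, 1 ≤ E →
      |(∑' k, (dirichletCount (f k) (b k) E : ℝ)) -
        ((1 / (4 * Real.pi)) *
            (∑ k ∈ Finset.range (coreIndex b E), f k * b k) * E -
          (1 / (4 * Real.pi)) *
            (∑ k ∈ Finset.range (coreIndex b E), 2 * (f k + b k)) *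
              Real.sqrt E +
          ∑ k ∈ Finset.range (coreIndex b E),
            (1 / 4) * ((fullEllipseCount (f k) (b k)
                (Real.sqrt E / Real.pi) : ℝ) -
              (f k * b k / Real.pi) * E))| ≤ C * Real.sqrt E := by

  have hT0 : (0:ℝ) ≤ ∑' k, b k := tsum_nonneg (fun k => (hb k).le)
  have hpi : (0:ℝ) < Real.pi := Real.pi_pos
  refine ⟨(∑' k, b k) / Real.pi + 1, by positivity, ?_⟩
  intro E hE
  have hE0 : (0:ℝ) < E := lt_of_lt_of_le one_pos hE
  have hsE : (0:ℝ) < Real.sqrt E := Real.sqrt_pos.2 hE0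
  have hsE1 : (1:ℝ) ≤ Real.sqrt E := by
    rw [show (1:ℝ) = Real.sqrt 1 by simp]
    exact Real.sqrt_le_sqrt hE
  set n := coreIndex b E with hndef
  have hIio : {k : ℕ | Real.pi / Real.sqrt E ≤ b k} = Set.Iio n :=
    coreIndex_eq b E hE hmono hlim
  have hge : ∀ k < n, Real.pi / Real.sqrt E ≤ b k := by
    intro k hk
    have : k ∈ Set.Iio n := hk
    rw [← hIio] at this
    exact this
  have hlt : ∀ k, n ≤ k → b k < Real.pi / Real.sqrt E := by
    intro k hk
    by_contra h
    push_neg at h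
    have : k ∈ Set.Iio n := hIio ▸ h
    exact absurd this (by simp; omega)
  -- dirichletCount vanishes beyond the core
  have hzero : ∀ k ∉ Finset.range n, (dirichletCount (f k) (b k) E : ℝ) = 0 := by
    intro k hk
    rw [Finset.mem_range, not_lt] at hk
    have hbk := hlt k hk
    have hempty : {p : ℤ × ℤ | 1 ≤ p.1 ∧ 1 ≤ p.2 ∧
        Real.pi ^ 2 * (p.1 : ℝ) ^ 2 / f k ^ 2 + Real.pi ^ 2 * (p.2 : ℝ) ^ 2 / b k ^ 2 ≤ E}
        = ∅ := by
      ext p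
      simp only [Set.mem_setOf_eq, Set.mem_empty_iff_false, iff_false, not_and]
      intro h1 h2 h3
      have hm : (1:ℝ) ≤ (p.2:ℝ) := by exact_mod_cast h2
      have hfk : 0 < f k := lt_of_lt_of_le hc (hf k)
      have h4 : (0:ℝ) ≤ Real.pi ^ 2 * (p.1 : ℝ) ^ 2 / f k ^ 2 := by positivity
      have hm2 : Real.pi ^ 2 ≤ Real.pi ^ 2 * (p.2:ℝ) ^ 2 := by
        nlinarith [Real.pi_pos, sq_nonneg ((p.2:ℝ) - 1), sq_nonneg Real.pi]
      have h5 : Real.pi ^ 2 / b k ^ 2 ≤ Real.pi ^ 2 * (p.2:ℝ) ^ 2 / b k ^ 2 := by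
        exact div_le_div_of_nonneg_right hm2 (pow_pos (hb k) 2).le
      have h6 : Real.pi ^ 2 / b k ^ 2 ≤ E := by linarith
      have h7 : Real.pi ^ 2 ≤ E * b k ^ 2 := by
        rw [div_le_iff₀ (pow_pos (hb k) 2)] at h6
        linarith
      have h8 : Real.pi / Real.sqrt E ≤ b k := by
        rw [div_le_iff₀ hsE]
        have hx2 : (b k * Real.sqrt E) ^ 2 = b k ^ 2 * E := by
          rw [mul_pow, Real.sq_sqrt hE0.le]
        nlinarith [h7, hx2, mul_nonneg (hb k).le hsE.le, Real.pi_pos]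
      exact absurd h8 (not_le.2 hbk)
    unfold dirichletCount
    rw [hempty, Set.ncard_empty]
    simp
  have htsum : (∑' k, (dirichletCount (f k) (b k) E : ℝ)) =
      ∑ k ∈ Finset.range n, (dirichletCount (f k) (b k) E : ℝ) := tsum_eq_sum hzero
  -- turn the target into a single sum
  have hexp : (1 / (4 * Real.pi)) * (∑ k ∈ Finset.range n, f k * b k) * E -
      (1 / (4 * Real.pi)) * (∑ k ∈ Finset.range n, 2 * (f k + b k)) * Real.sqrt E +
      ∑ k ∈ Finset.range n, (1 / 4) * ((fullEllipseCount (f k) (b k)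
        (Real.sqrt E / Real.pi) : ℝ) - (f k * b k / Real.pi) * E) =
      ∑ k ∈ Finset.range n, ((1 / (4 * Real.pi)) * (f k * b k) * E -
        (1 / (4 * Real.pi)) * (2 * (f k + b k)) * Real.sqrt E +
        (1 / 4) * ((fullEllipseCount (f k) (b k)
          (Real.sqrt E / Real.pi) : ℝ) - (f k * b k / Real.pi) * E)) := by
    rw [Finset.sum_add_distrib, Finset.sum_sub_distrib]
    congr 1
    congr 1
    · rw [Finset.mul_sum, Finset.sum_mul]
    · rw [Finset.mul_sum, Finset.sum_mul]
  rw [htsum, hexp, ← Finset.sum_sub_distrib]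
  calc |∑ k ∈ Finset.range n, ((dirichletCount (f k) (b k) E : ℝ) -
        ((1 / (4 * Real.pi)) * (f k * b k) * E -
          (1 / (4 * Real.pi)) * (2 * (f k + b k)) * Real.sqrt E +
          (1 / 4) * ((fullEllipseCount (f k) (b k)
            (Real.sqrt E / Real.pi) : ℝ) - (f k * b k / Real.pi) * E)))|
      ≤ ∑ k ∈ Finset.range n, |(dirichletCount (f k) (b k) E : ℝ) -
        ((1 / (4 * Real.pi)) * (f k * b k) * E -
          (1 / (4 * Real.pi)) * (2 * (f k + b k)) * Real.sqrt E +
          (1 / 4) * ((fullEllipseCount (f k) (b k)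
            (Real.sqrt E / Real.pi) : ℝ) - (f k * b k / Real.pi) * E))| :=
        Finset.abs_sum_le_sum_abs _ _
    _ ≤ ∑ k ∈ Finset.range n, (1:ℝ) := by
        apply Finset.sum_le_sum
        intro k _
        exact per_k (f k) (b k) E (lt_of_lt_of_le hc (hf k)) (hb k) hE
    _ = (n:ℝ) := by simp
    _ ≤ ((∑' k, b k) / Real.pi + 1) * Real.sqrt E := by
        have hnb : (n:ℝ) * (Real.pi / Real.sqrt E) ≤ ∑' k, b k := by
          calc (n:ℝ) * (Real.pi / Real.sqrt E)
              = ∑ k ∈ Finset.range n, (Real.pi / Real.sqrt E) := by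
                simp [mul_comm]
            _ ≤ ∑ k ∈ Finset.range n, b k := by
                apply Finset.sum_le_sum
                intro k hk
                exact hge k (Finset.mem_range.1 hk)
            _ ≤ ∑' k, b k := Summable.sum_le_tsum _ (fun i _ => (hb i).le) hsum
        have h1 : (n:ℝ) * Real.pi ≤ (∑' k, b k) * Real.sqrt E := by
          have := mul_le_mul_of_nonneg_right hnb hsE.le
          rwa [mul_assoc, div_mul_cancel₀ _ (ne_of_gt hsE)] at this
        have h2 : (n:ℝ) ≤ (∑' k, b k) * Real.sqrt E / Real.pi :=
          (le_div_iff₀ hpi).2 h1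
        have heq : ((∑' k, b k) / Real.pi) * Real.sqrt E = (∑' k, b k) * Real.sqrt E / Real.pi := by
          ring
        nlinarith [hsE.le]
end

section
/- Let f : ℕ → ℝ satisfy f(k) ≥ c > 0 for all k and let (b_k)_{k≥1} be positive with b_k → 0. Then for every E > 0 the series Σ_{k=1}^∞ #{(l,m) ∈ ℤ² : l ≥ 0, m ≥ 1, π²l²/f(k)² + π²m²/b_k² ≤ E} has only finitely many nonzero terms: for every k with b_k < π/√E the k-th summand is zero, so the sum equals the finite sum over k ≤ n(E) where n(E) = max{k : b_k ≥ π/√E}. The same holds for the pure Dirichlet counts (l ≥ 1). In particular, both Dirichlet–Neumann bracketing bounds for the counting function of a simple domain are finite for every E, so the Dirichlet spectrum of a simple domain is purely discrete. -/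
open Real Filter

/-- The mixed Dirichlet–Neumann counting function: integer pairs `(l, m)` with
`l ≥ 0`, `m ≥ 1` and `π²l²/a² + π²m²/b² ≤ E`. -/
noncomputable def mixedCount (a b E : ℝ) : ℕ :=
  Set.ncard {p : ℤ × ℤ | 0 ≤ p.1 ∧ 1 ≤ p.2 ∧
    Real.pi ^ 2 * (p.1 : ℝ) ^ 2 / a ^ 2 + Real.pi ^ 2 * (p.2 : ℝ) ^ 2 / b ^ 2 ≤ E}

/-- If `b < π/√E`, no pair `(l, m)` with `m ≥ 1` satisfies the eigenvalue bound. -/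
lemma rect_set_empty (a b E : ℝ) (hb : 0 < b) (hE : 0 < E)
    (h : b < Real.pi / Real.sqrt E) :
    {p : ℤ × ℤ | 0 ≤ p.1 ∧ 1 ≤ p.2 ∧
      Real.pi ^ 2 * (p.1 : ℝ) ^ 2 / a ^ 2 + Real.pi ^ 2 * (p.2 : ℝ) ^ 2 / b ^ 2 ≤ E} = ∅ := by
  have hπ := Real.pi_pos
  have hsE : 0 < Real.sqrt E := Real.sqrt_pos.2 hE
  have h1 : b * Real.sqrt E < Real.pi := (lt_div_iff₀ hsE).1 h
  have hs := Real.sq_sqrt hE.le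
  have h2 : b ^ 2 * E < Real.pi ^ 2 := by
    nlinarith [mul_pos (sub_pos.2 h1) (by positivity : (0:ℝ) < Real.pi + b * Real.sqrt E)]
  ext ⟨l, m⟩
  simp only [Set.mem_setOf_eq, Set.mem_empty_iff_false, iff_false]
  rintro ⟨hl, hm, hle⟩
  have hm' : (1 : ℝ) ≤ (m : ℝ) := by exact_mod_cast hm
  have t1 : 0 ≤ Real.pi ^ 2 * (l : ℝ) ^ 2 / a ^ 2 := by positivity
  have hbb : 0 < b ^ 2 := pow_pos hb 2
  have t2 : Real.pi ^ 2 * (m : ℝ) ^ 2 / b ^ 2 ≤ E := by linarith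
  have t3 : Real.pi ^ 2 * (m : ℝ) ^ 2 ≤ E * b ^ 2 := (div_le_iff₀ hbb).1 t2
  have hm2 : (1 : ℝ) ≤ (m : ℝ) ^ 2 := by nlinarith [sq_nonneg ((m : ℝ) - 1)]
  nlinarith [mul_le_mul_of_nonneg_left hm2 (sq_nonneg Real.pi)]

lemma mixedCount_zero_of_lt (a b E : ℝ) (hb : 0 < b) (hE : 0 < E)
    (h : b < Real.pi / Real.sqrt E) : mixedCount a b E = 0 := by
  rw [mixedCount, rect_set_empty a b E hb hE h, Set.ncard_empty]

lemma dirichletCount_zero_of_lt (a b E : ℝ) (hb : 0 < b) (hE : 0 < E)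
    (h : b < Real.pi / Real.sqrt E) : dirichletCount a b E = 0 := by
  have hempty : {p : ℤ × ℤ | 1 ≤ p.1 ∧ 1 ≤ p.2 ∧
      Real.pi ^ 2 * (p.1 : ℝ) ^ 2 / a ^ 2 + Real.pi ^ 2 * (p.2 : ℝ) ^ 2 / b ^ 2 ≤ E} = ∅ := by
    rw [← Set.subset_empty_iff, ← rect_set_empty a b E hb hE h]
    rintro ⟨l, m⟩ ⟨hl, hm, hle⟩
    exact ⟨by linarith, hm, hle⟩
  rw [dirichletCount, hempty, Set.ncard_empty]

/-- For widths `f k ≥ c > 0` and positive heights `b k → 0`, each bracketing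
series has only finitely many nonzero terms: the `k`-th summand vanishes as
soon as `b_k < π/√E`, so each series equals the finite sum over the indices up
to `n(E) = max{k : b_k ≥ π/√E}`.  In particular both Dirichlet–Neumann
bracketing bounds for a simple domain are finite for every `E`. -/
theorem bracketing_sums_finite (f b : ℕ → ℝ) (c : ℝ) (hc : 0 < c)
    (hf : ∀ k, c ≤ f k) (hb : ∀ k, 0 < b k)
    (hlim : Tendsto b atTop (nhds 0)) (E : ℝ) (hE : 0 < E) :
    (∀ k, b k < Real.pi / Real.sqrt E → mixedCount (f k) (b k) E = 0) ∧
    (∀ k, b k < Real.pi / Real.sqrt E → dirichletCount (f k) (b k) E = 0) ∧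
    {k : ℕ | mixedCount (f k) (b k) E ≠ 0}.Finite ∧
    {k : ℕ | dirichletCount (f k) (b k) E ≠ 0}.Finite ∧
    (∑' k, (mixedCount (f k) (b k) E : ℝ)) =
      ∑ k ∈ Finset.Iic (sSup {k : ℕ | Real.pi / Real.sqrt E ≤ b k}),
        (mixedCount (f k) (b k) E : ℝ) ∧
    (∑' k, (dirichletCount (f k) (b k) E : ℝ)) =
      ∑ k ∈ Finset.Iic (sSup {k : ℕ | Real.pi / Real.sqrt E ≤ b k}),
        (dirichletCount (f k) (b k) E : ℝ) := by
  have hmix : ∀ k, b k < Real.pi / Real.sqrt E → mixedCount (f k) (b k) E = 0 :=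
    fun k hk => mixedCount_zero_of_lt (f k) (b k) E (hb k) hE hk
  have hdir : ∀ k, b k < Real.pi / Real.sqrt E → dirichletCount (f k) (b k) E = 0 :=
    fun k hk => dirichletCount_zero_of_lt (f k) (b k) E (hb k) hE hk
  have hpos : (0:ℝ) < Real.pi / Real.sqrt E := div_pos Real.pi_pos (Real.sqrt_pos.2 hE)
  have hev : ∀ᶠ k in atTop, b k < Real.pi / Real.sqrt E :=
    hlim.eventually (eventually_lt_nhds hpos)
  obtain ⟨N, hN⟩ := eventually_atTop.1 hev
  have hmixfin : {k : ℕ | mixedCount (f k) (b k) E ≠ 0}.Finite := by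
    apply (Set.finite_Iio N).subset
    intro k hk
    by_contra hlt
    exact hk (hmix k (hN k (not_lt.1 hlt)))
  have hdirfin : {k : ℕ | dirichletCount (f k) (b k) E ≠ 0}.Finite := by
    apply (Set.finite_Iio N).subset
    intro k hk
    by_contra hlt
    exact hk (hdir k (hN k (not_lt.1 hlt)))
  set S : Set ℕ := {k : ℕ | Real.pi / Real.sqrt E ≤ b k} with hS
  have hSfin : S.Finite := by
    apply (Set.finite_Iio N).subset
    intro k hk
    by_contra hlt
    exact absurd (hN k (not_lt.1 hlt)) (not_lt.2 hk)
  have hSbdd : BddAbove S := hSfin.bddAbove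
  have key : ∀ k ∉ Finset.Iic (sSup S), b k < Real.pi / Real.sqrt E := by
    intro k hk
    by_contra hge
    exact hk (Finset.mem_Iic.2 (le_csSup hSbdd (not_lt.1 hge)))
  refine ⟨hmix, hdir, hmixfin, hdirfin, ?_, ?_⟩
  · exact tsum_eq_sum (fun k hk => by rw [hmix k (key k hk)]; norm_num)
  · exact tsum_eq_sum (fun k hk => by rw [hdir k (key k hk)]; norm_num)
end
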